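/- arXiv:2010.10989 — 4 statements merged into one kernel-verified Lean document; each statement's English description precedes it below -/
import Mathlib

section
/- Let x, y be real numbers and i, j nonnegative integers. Define g_n^{(i)}(x) to have second mixed moment E[g_n^{(i)}(x) g_n^{(j)}(y)] = n^{-(1+i+j)} * sum over r from 0 to n of (r)_i (r)_j (1 + x/n)^r (1 + y/n)^r, where (r)_i denotes the falling factorial. Then this quantity converges as n → ∞ to the integral over t in [0,1] of t^{i+j} e^{(x+y)t} dt. -/
open Real Filter MeasureTheory


lemma step_integral (n : ℕ) (hn : 0 < n) (f : ℕ → ℝ) :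
    ∫ t in Set.Ico (0:ℝ) 1, f ⌊t * (n:ℝ)⌋₊ = (1 / (n:ℝ)) * ∑ r ∈ Finset.range n, f r := by
  have hn' : (0:ℝ) < n := Nat.cast_pos.mpr hn
  have hU : Set.Ico (0:ℝ) 1 = ⋃ r ∈ Finset.range n, Set.Ico ((r:ℝ)/n) (((r:ℝ)+1)/n) := by
    ext t
    simp only [Set.mem_iUnion, Finset.mem_range, Set.mem_Ico]
    constructor
    · rintro ⟨h0, h1⟩
      have htn : 0 ≤ t * n := by positivity
      refine ⟨⌊t * (n:ℝ)⌋₊, ?_, ?_, ?_⟩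
      · rw [Nat.floor_lt htn]
        nlinarith
      · rw [div_le_iff₀ hn']
        exact Nat.floor_le htn
      · rw [lt_div_iff₀ hn']
        exact_mod_cast Nat.lt_floor_add_one (t * (n:ℝ))
    · rintro ⟨r, hr, h2, h3⟩
      have h2' : (0:ℝ) ≤ (r:ℝ)/n := by positivity
      have : ((r:ℝ)+1)/n ≤ 1 := by
        rw [div_le_one hn']
        have : (r:ℝ) + 1 ≤ n := by exact_mod_cast hr
        linarith
      exact ⟨le_trans h2' h2, lt_of_lt_of_le h3 this⟩
  have hfloor : ∀ r ∈ Finset.range n, ∀ t ∈ Set.Ico ((r:ℝ)/n) (((r:ℝ)+1)/n),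
      ⌊t * (n:ℝ)⌋₊ = r := by
    intro r _ t ⟨h2, h3⟩
    have h2' : (r:ℝ) ≤ t * n := by rwa [div_le_iff₀ hn'] at h2
    have h3' : t * n < (r:ℝ) + 1 := by rwa [lt_div_iff₀ hn'] at h3
    have ht0 : (0:ℝ) ≤ t * n := le_trans (by positivity) h2'
    rw [Nat.floor_eq_iff ht0]
    exact ⟨by exact_mod_cast h2', by exact_mod_cast h3'⟩
  have hpiece : ∀ r ∈ Finset.range n,
      ∫ t in Set.Ico ((r:ℝ)/n) (((r:ℝ)+1)/n), f ⌊t * (n:ℝ)⌋₊ = (1/(n:ℝ)) * f r := by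
    intro r hr
    rw [setIntegral_congr_fun measurableSet_Ico (fun t ht => by rw [hfloor r hr t ht])]
    rw [setIntegral_const, Real.volume_real_Ico, smul_eq_mul]
    have he : ((r:ℝ)+1)/n - (r:ℝ)/n = 1/(n:ℝ) := by field_simp; ring
    rw [he, max_eq_left (by positivity)]
  have hdisj : Set.Pairwise ↑(Finset.range n)
      (Function.onFun Disjoint fun r : ℕ => Set.Ico ((r:ℝ)/n) (((r:ℝ)+1)/n)) := by
    intro a _ b _ hab
    simp only [Function.onFun, Set.Ico_disjoint_Ico]
    rcases lt_or_gt_of_ne hab with h | h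
    · have : (a:ℝ) + 1 ≤ b := by exact_mod_cast h
      calc min (((a:ℝ)+1)/n) (((b:ℝ)+1)/n) ≤ ((a:ℝ)+1)/n := min_le_left _ _
        _ ≤ (b:ℝ)/n := by gcongr
        _ ≤ max ((a:ℝ)/n) ((b:ℝ)/n) := le_max_right _ _
    · have : (b:ℝ) + 1 ≤ a := by exact_mod_cast h
      calc min (((a:ℝ)+1)/n) (((b:ℝ)+1)/n) ≤ ((b:ℝ)+1)/n := min_le_right _ _
        _ ≤ (a:ℝ)/n := by gcongr
        _ ≤ max ((a:ℝ)/n) ((b:ℝ)/n) := le_max_left _ _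
  have hint : ∀ r ∈ Finset.range n, IntegrableOn (fun t => f ⌊t * (n:ℝ)⌋₊)
      (Set.Ico ((r:ℝ)/n) (((r:ℝ)+1)/n)) volume := by
    intro r hr
    rw [integrableOn_congr_fun (fun t ht => by rw [hfloor r hr t ht]) measurableSet_Ico]
    exact integrableOn_const (by rw [Real.volume_Ico]; exact ENNReal.ofReal_lt_top.ne)
  rw [hU, integral_biUnion_finset _ (fun r _ => measurableSet_Ico) hdisj hint, Finset.mul_sum]
  exact Finset.sum_congr rfl hpiece

lemma tendsto_floor_div (t : ℝ) (ht : 0 ≤ t) :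
    Tendsto (fun n : ℕ => (⌊t * (n:ℝ)⌋₊ : ℝ) / n) atTop (nhds t) :=
  (tendsto_nat_floor_mul_div_atTop ht).comp tendsto_natCast_atTop_atTop

lemma tendsto_desc (i : ℕ) {t : ℝ} (ht : 0 < t) :
    Tendsto (fun n : ℕ => ((⌊t * (n:ℝ)⌋₊.descFactorial i : ℝ)) / (n:ℝ)^i) atTop
      (nhds (t^i)) := by
  have hfl := tendsto_floor_div t ht.le
  have hfloor_top : Tendsto (fun n : ℕ => ⌊t * (n:ℝ)⌋₊) atTop atTop :=
    tendsto_nat_floor_mul_atTop t ht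
  have hmain : Tendsto (fun n : ℕ => ∏ k ∈ Finset.range i,
      ((⌊t * (n:ℝ)⌋₊ : ℝ) / n - (k:ℝ)/n)) atTop (nhds (∏ _k ∈ Finset.range i, t)) := by
    apply tendsto_finset_prod
    intro k _
    have hk : Tendsto (fun n : ℕ => (k:ℝ)/n) atTop (nhds 0) :=
      tendsto_const_div_atTop_nhds_zero_nat (k:ℝ)
    simpa using hfl.sub hk
  rw [Finset.prod_const, Finset.card_range] at hmain
  apply hmain.congr'
  filter_upwards [hfloor_top.eventually_ge_atTop i, eventually_gt_atTop 0] with n hni hn0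
  have hcast : ((⌊t * (n:ℝ)⌋₊.descFactorial i : ℕ) : ℝ)
      = ∏ k ∈ Finset.range i, ((⌊t * (n:ℝ)⌋₊ : ℝ) - k) := by
    rw [Nat.descFactorial_eq_prod_range, Nat.cast_prod]
    refine Finset.prod_congr rfl fun k hk => ?_
    rw [Nat.cast_sub (le_trans (Finset.mem_range.1 hk).le hni)]
  rw [hcast]
  have hnc : (n:ℝ) ≠ 0 := Nat.cast_ne_zero.mpr hn0.ne'
  calc ∏ k ∈ Finset.range i, ((⌊t * (n:ℝ)⌋₊ : ℝ) / n - (k:ℝ)/n)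
      = ∏ k ∈ Finset.range i, (((⌊t * (n:ℝ)⌋₊ : ℝ) - k) / n) := by
        refine Finset.prod_congr rfl fun k _ => ?_
        rw [sub_div]
    _ = (∏ k ∈ Finset.range i, ((⌊t * (n:ℝ)⌋₊ : ℝ) - k)) / ∏ _k ∈ Finset.range i, (n:ℝ) :=
        Finset.prod_div_distrib _ _
    _ = (∏ k ∈ Finset.range i, ((⌊t * (n:ℝ)⌋₊ : ℝ) - k)) / (n:ℝ)^i := by
        rw [Finset.prod_const, Finset.card_range]

lemma tendsto_exp_part (x y : ℝ) {t : ℝ} (ht : 0 ≤ t) :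
    Tendsto (fun n : ℕ => ((1 + x/(n:ℝ)) * (1 + y/(n:ℝ))) ^ ⌊t * (n:ℝ)⌋₊) atTop
      (nhds (Real.exp ((x + y) * t))) := by
  have hx : Tendsto (fun n : ℕ => (n:ℝ) * Real.log (1 + x/n)) atTop (nhds x) :=
    (Real.tendsto_mul_log_one_add_div_atTop x).comp tendsto_natCast_atTop_atTop
  have hy : Tendsto (fun n : ℕ => (n:ℝ) * Real.log (1 + y/n)) atTop (nhds y) :=
    (Real.tendsto_mul_log_one_add_div_atTop y).comp tendsto_natCast_atTop_atTop
  have hfl := tendsto_floor_div t ht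
  have hmain : Tendsto (fun n : ℕ => Real.exp ((⌊t * (n:ℝ)⌋₊:ℝ)/n * ((n:ℝ) * Real.log (1 + x/n))
      + (⌊t * (n:ℝ)⌋₊:ℝ)/n * ((n:ℝ) * Real.log (1 + y/n)))) atTop
      (nhds (Real.exp (t * x + t * y))) :=
    (Real.continuous_exp.tendsto _).comp ((hfl.mul hx).add (hfl.mul hy))
  have hlim : t * x + t * y = (x + y) * t := by ring
  rw [hlim] at hmain
  have hxp : ∀ᶠ n : ℕ in atTop, 0 < 1 + x/(n:ℝ) := by
    have : Tendsto (fun n : ℕ => x/(n:ℝ)) atTop (nhds 0) :=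
      tendsto_const_div_atTop_nhds_zero_nat x
    filter_upwards [this.eventually (eventually_gt_nhds (by norm_num : (-1:ℝ) < 0))] with n hn
    linarith
  have hyp : ∀ᶠ n : ℕ in atTop, 0 < 1 + y/(n:ℝ) := by
    have : Tendsto (fun n : ℕ => y/(n:ℝ)) atTop (nhds 0) :=
      tendsto_const_div_atTop_nhds_zero_nat y
    filter_upwards [this.eventually (eventually_gt_nhds (by norm_num : (-1:ℝ) < 0))] with n hn
    linarith
  apply hmain.congr'
  filter_upwards [hxp, hyp, eventually_gt_atTop 0] with n hxn hyn hn
  have hn' : (n:ℝ) ≠ 0 := Nat.cast_ne_zero.mpr hn.ne'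
  have h1 : (⌊t * (n:ℝ)⌋₊:ℝ)/n * ((n:ℝ) * Real.log (1 + x/n))
      = ⌊t * (n:ℝ)⌋₊ * Real.log (1 + x/n) := by field_simp
  have h2 : (⌊t * (n:ℝ)⌋₊:ℝ)/n * ((n:ℝ) * Real.log (1 + y/n))
      = ⌊t * (n:ℝ)⌋₊ * Real.log (1 + y/n) := by field_simp
  rw [h1, h2, ← mul_add, ← Real.log_mul hxn.ne' hyn.ne', Real.exp_nat_mul,
    Real.exp_log (mul_pos hxn hyn)]

lemma abs_base_pow_le (x y : ℝ) (n r : ℕ) (hr : r ≤ n) :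
    |(1 + x/(n:ℝ)) * (1 + y/(n:ℝ))| ^ r ≤ Real.exp (|x| + |y|) := by
  rcases Nat.eq_zero_or_pos n with hn | hn
  · subst hn
    interval_cases r
    simpa using Real.one_le_exp (by positivity)
  have hn' : (0:ℝ) < n := Nat.cast_pos.mpr hn
  have h1 : |1 + x/(n:ℝ)| ≤ Real.exp (|x|/n) := by
    calc |1 + x/(n:ℝ)| ≤ |(1:ℝ)| + |x/(n:ℝ)| := abs_add_le _ _
      _ = 1 + |x|/n := by rw [abs_one, abs_div, Nat.abs_cast]
      _ ≤ Real.exp (|x|/n) := by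
          have := Real.add_one_le_exp (|x|/(n:ℝ))
          linarith
  have h2 : |1 + y/(n:ℝ)| ≤ Real.exp (|y|/n) := by
    calc |1 + y/(n:ℝ)| ≤ |(1:ℝ)| + |y/(n:ℝ)| := abs_add_le _ _
      _ = 1 + |y|/n := by rw [abs_one, abs_div, Nat.abs_cast]
      _ ≤ Real.exp (|y|/n) := by
          have := Real.add_one_le_exp (|y|/(n:ℝ))
          linarith
  have hb : |(1 + x/(n:ℝ)) * (1 + y/(n:ℝ))| ≤ Real.exp ((|x| + |y|)/n) := by
    rw [abs_mul, add_div, Real.exp_add]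
    exact mul_le_mul h1 h2 (abs_nonneg _) (Real.exp_nonneg _)
  calc |(1 + x/(n:ℝ)) * (1 + y/(n:ℝ))| ^ r ≤ (Real.exp ((|x| + |y|)/n)) ^ r :=
        pow_le_pow_left₀ (abs_nonneg _) hb r
    _ = Real.exp ((r:ℝ) * ((|x| + |y|)/n)) := (Real.exp_nat_mul _ r).symm
    _ ≤ Real.exp (|x| + |y|) := by
        apply Real.exp_le_exp.mpr
        have hrn : (r:ℝ) ≤ n := Nat.cast_le.mpr hr
        have hxy : (0:ℝ) ≤ |x| + |y| := by positivity
        rw [mul_div_assoc']  -- r * s / n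
        rw [div_le_iff₀ hn']
        nlinarith

lemma desc_le (n r i : ℕ) (hr : r ≤ n) : ((r.descFactorial i : ℕ) : ℝ) ≤ (n:ℝ)^i := by
  exact_mod_cast le_trans (Nat.descFactorial_le_pow r i) (Nat.pow_le_pow_left hr i)


/-- the covariance of derivatives of the rescaled random polynomial
converges to `∫_0^1 t^(i+j) e^((x+y)t) dt`. -/
theorem covariance_limit (x y : ℝ) (i j : ℕ) :
    Tendsto (fun n : ℕ =>
        (1 / (n : ℝ) ^ (1 + i + j)) *
          ∑ r ∈ Finset.range (n + 1),
            (r.descFactorial i : ℝ) * (r.descFactorial j : ℝ) *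
              (1 + x / n) ^ r * (1 + y / n) ^ r)
      atTop (nhds (∫ t in (0:ℝ)..1, t ^ (i + j) * Real.exp ((x + y) * t))) := by
  have hIoo : (∫ t in (0:ℝ)..1, t ^ (i + j) * Real.exp ((x + y) * t))
      = ∫ t in Set.Ioo (0:ℝ) 1, t ^ (i + j) * Real.exp ((x + y) * t) := by
    rw [intervalIntegral.integral_of_le zero_le_one, MeasureTheory.integral_Ioc_eq_integral_Ioo]
  rw [hIoo]
  set G : ℕ → ℕ → ℝ := fun n r => (1/(n:ℝ)^(i+j)) *
    ((r.descFactorial i : ℝ) * (r.descFactorial j : ℝ) * ((1 + x/(n:ℝ)) * (1 + y/(n:ℝ)))^r)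
    with hG
  have hGbound : ∀ n r : ℕ, r ≤ n → |G n r| ≤ Real.exp (|x| + |y|) := by
    intro n r hr
    have hexp1 : (1:ℝ) ≤ Real.exp (|x| + |y|) := Real.one_le_exp (by positivity)
    rcases Nat.eq_zero_or_pos n with hn | hn
    · subst hn
      interval_cases r
      cases i <;> cases j <;>
        simp [hG, Nat.zero_descFactorial_succ, abs_of_nonneg] <;> positivity
    · have hn' : (0:ℝ) < n := Nat.cast_pos.mpr hn
      have hd1 := desc_le n r i hr
      have hd2 := desc_le n r j hr
      have hc := abs_base_pow_le x y n r hr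
      have hdp1 : (0:ℝ) ≤ ((r.descFactorial i : ℕ) : ℝ) := Nat.cast_nonneg _
      have hdp2 : (0:ℝ) ≤ ((r.descFactorial j : ℕ) : ℝ) := Nat.cast_nonneg _
      calc |G n r| = (1/(n:ℝ)^(i+j)) * ((r.descFactorial i : ℝ) * (r.descFactorial j : ℝ)
            * |(1 + x/(n:ℝ)) * (1 + y/(n:ℝ))|^r) := by
            simp only [hG, abs_mul, abs_pow,
              abs_of_nonneg (show (0:ℝ) ≤ 1/(n:ℝ)^(i+j) by positivity), Nat.abs_cast]
        _ ≤ (1/(n:ℝ)^(i+j)) * ((n:ℝ)^i * ((n:ℝ)^j * Real.exp (|x| + |y|))) := by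
            rw [← mul_assoc ((n:ℝ)^i)]
            gcongr
        _ = Real.exp (|x| + |y|) := by
            rw [pow_add]
            field_simp
  set F : ℕ → ℝ → ℝ := fun n t => G n ⌊t * (n:ℝ)⌋₊ with hF
  have hmeas : ∀ n, AEStronglyMeasurable (F n) (volume.restrict (Set.Ioo (0:ℝ) 1)) := by
    intro n
    have h1 : Measurable fun t : ℝ => ⌊t * (n:ℝ)⌋₊ :=
      Nat.measurable_floor.comp (measurable_id.mul_const _)
    have h2 : F n = (G n) ∘ (fun t : ℝ => ⌊t * (n:ℝ)⌋₊) := rfl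
    rw [h2]
    exact (measurable_from_nat.comp h1).aestronglyMeasurable
  have hfloor_le : ∀ (n : ℕ) (t : ℝ), t ∈ Set.Ioo (0:ℝ) 1 → ⌊t * (n:ℝ)⌋₊ ≤ n := by
    intro n t ht
    have h1 : t * (n:ℝ) ≤ n := by nlinarith [ht.1, ht.2, Nat.cast_nonneg (α := ℝ) n]
    calc ⌊t * (n:ℝ)⌋₊ ≤ ⌊(n:ℝ)⌋₊ := Nat.floor_mono h1
      _ = n := Nat.floor_natCast n
  have hbound : ∀ n, ∀ᵐ t ∂(volume.restrict (Set.Ioo (0:ℝ) 1)),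
      ‖F n t‖ ≤ Real.exp (|x| + |y|) := by
    intro n
    filter_upwards [ae_restrict_mem measurableSet_Ioo] with t ht
    rw [Real.norm_eq_abs]
    exact hGbound n _ (hfloor_le n t ht)
  have hlim : ∀ᵐ t ∂(volume.restrict (Set.Ioo (0:ℝ) 1)),
      Tendsto (fun n => F n t) atTop (nhds (t ^ (i+j) * Real.exp ((x+y)*t))) := by
    filter_upwards [ae_restrict_mem measurableSet_Ioo] with t ht
    have h := ((tendsto_desc i ht.1).mul (tendsto_desc j ht.1)).mul
      (tendsto_exp_part x y ht.1.le)
    rw [← pow_add] at h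
    apply h.congr'
    filter_upwards [eventually_gt_atTop 0] with n hn
    show (⌊t * (n:ℝ)⌋₊.descFactorial i : ℝ)/(n:ℝ)^i
        * ((⌊t * (n:ℝ)⌋₊.descFactorial j : ℝ)/(n:ℝ)^j)
        * ((1 + x/(n:ℝ)) * (1 + y/(n:ℝ)))^⌊t * (n:ℝ)⌋₊ = G n ⌊t * (n:ℝ)⌋₊
    simp only [hG]
    rw [pow_add]
    ring
  have hDCT := MeasureTheory.tendsto_integral_of_dominated_convergence
    (μ := volume.restrict (Set.Ioo (0:ℝ) 1)) (fun _ => Real.exp (|x| + |y|)) hmeas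
    (integrableOn_const (by rw [Real.volume_Ioo]; exact ENNReal.ofReal_lt_top.ne))
    hbound hlim
  have htail : Tendsto (fun n : ℕ => (1/(n:ℝ)^(1+i+j)) * ((n.descFactorial i : ℝ) *
      (n.descFactorial j : ℝ) * (1 + x/(n:ℝ))^n * (1 + y/(n:ℝ))^n)) atTop (nhds 0) := by
    apply squeeze_zero_norm (a := fun n : ℕ => Real.exp (|x|+|y|) / n)
    · intro n
      rcases Nat.eq_zero_or_pos n with hn | hn
      · subst hn; simp
      · have hn' : (0:ℝ) < n := Nat.cast_pos.mpr hn
        have hd1 := desc_le n n i le_rfl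
        have hd2 := desc_le n n j le_rfl
        have hc := abs_base_pow_le x y n n le_rfl
        rw [abs_mul] at hc
        have hc' : |1 + x/(n:ℝ)|^n * |1 + y/(n:ℝ)|^n ≤ Real.exp (|x| + |y|) := by
          rw [← mul_pow]; exact hc
        calc ‖(1/(n:ℝ)^(1+i+j)) * ((n.descFactorial i : ℝ) *
              (n.descFactorial j : ℝ) * (1 + x/(n:ℝ))^n * (1 + y/(n:ℝ))^n)‖
            = (1/(n:ℝ)^(1+i+j)) * ((n.descFactorial i : ℝ) * (n.descFactorial j : ℝ)
              * |1 + x/(n:ℝ)|^n * |1 + y/(n:ℝ)|^n) := by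
              rw [Real.norm_eq_abs, abs_mul, abs_mul, abs_mul, abs_mul, abs_pow, abs_pow,
                abs_of_nonneg (show (0:ℝ) ≤ 1/(n:ℝ)^(1+i+j) by positivity),
                Nat.abs_cast, Nat.abs_cast]
          _ ≤ (1/(n:ℝ)^(1+i+j)) * ((n:ℝ)^i * (n:ℝ)^j * Real.exp (|x| + |y|)) := by
              apply mul_le_mul_of_nonneg_left _ (by positivity)
              have hAB : (n.descFactorial i : ℝ) * (n.descFactorial j : ℝ)
                  ≤ (n:ℝ)^i * (n:ℝ)^j :=
                mul_le_mul hd1 hd2 (Nat.cast_nonneg _) (by positivity)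
              calc (n.descFactorial i : ℝ) * (n.descFactorial j : ℝ) * |1 + x/(n:ℝ)|^n
                    * |1 + y/(n:ℝ)|^n
                  = ((n.descFactorial i : ℝ) * (n.descFactorial j : ℝ))
                    * (|1 + x/(n:ℝ)|^n * |1 + y/(n:ℝ)|^n) := by ring
                _ ≤ ((n:ℝ)^i * (n:ℝ)^j) * Real.exp (|x| + |y|) :=
                    mul_le_mul hAB hc' (by positivity) (by positivity)
                _ = (n:ℝ)^i * (n:ℝ)^j * Real.exp (|x| + |y|) := by ring
          _ = Real.exp (|x|+|y|) / n := by
              rw [pow_add, pow_add, pow_one]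
              field_simp
    · exact tendsto_const_div_atTop_nhds_zero_nat _
  have key := hDCT.add htail
  rw [add_zero] at key
  apply key.congr'
  filter_upwards [eventually_gt_atTop 0] with n hn
  have hn' : (0:ℝ) < n := Nat.cast_pos.mpr hn
  have hne : (n:ℝ) ≠ 0 := hn'.ne'
  have hIco : (∫ t in Set.Ioo (0:ℝ) 1, F n t) = ∫ t in Set.Ico (0:ℝ) 1, F n t :=
    (MeasureTheory.integral_Ico_eq_integral_Ioo).symm
  rw [hIco]
  have hstep := step_integral n hn (G n)
  rw [show (fun t : ℝ => F n t) = (fun t : ℝ => G n ⌊t * (n:ℝ)⌋₊) from rfl, hstep,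
    Finset.sum_range_succ, mul_add]
  congr 1
  · rw [Finset.mul_sum, Finset.mul_sum]
    refine Finset.sum_congr rfl fun r _ => ?_
    simp only [hG, mul_pow, pow_add, pow_one]
    ring
end

section
/- Let g be an almost surely C^1 Gaussian process on [-M,M] with continuous covariance such that Var g(x) is bounded below by a positive constant on [-M,M], and suppose P(max_{t∈[-M,M]} |g'(t)| ≥ T) ≤ e^M/T for all T > 0. Then for any k intervals I_1,…,I_k ⊂ [-M,M] each of length at most ε^{1/2}, the sum ∑_{j=1}^k P(∃ x ∈ I_j with |g(x)| ≤ ε) = O(ε^{1/4}) as ε → 0, uniformly over such choices of intervals. -/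
open MeasureTheory ProbabilityTheory Real
open scoped ENNReal
open scoped NNReal

lemma gauss_smallball (v : ℝ) (hv : 0 < v) (v' : ℝ≥0) (hv' : v ≤ (v' : ℝ))
    (δ : ℝ) (hδ : 0 ≤ δ) :
    gaussianReal 0 v' (Set.Icc (-δ) δ) ≤ ENNReal.ofReal (2 * δ / Real.sqrt (2 * π * v)) := by
  have hv'0 : v' ≠ 0 := by
    intro h
    rw [h] at hv'
    simp at hv'
    linarith
  have hs : (0:ℝ) < Real.sqrt (2 * π * v) := Real.sqrt_pos.mpr (by positivity)
  have hb : ∀ x : ℝ, gaussianPDF 0 v' x ≤ ENNReal.ofReal ((Real.sqrt (2 * π * v))⁻¹) := by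
    intro x
    rw [gaussianPDF]
    apply ENNReal.ofReal_le_ofReal
    have h1 : gaussianPDFReal 0 v' x
        = (Real.sqrt (2 * π * (v':ℝ)))⁻¹ * rexp (- (x - 0)^2 / (2 * (v':ℝ))) := rfl
    rw [h1]
    have h2 : rexp (- (x - 0)^2 / (2 * (v':ℝ))) ≤ 1 := by
      apply Real.exp_le_one_iff.mpr
      have : (0:ℝ) < (v':ℝ) := lt_of_lt_of_le hv hv'
      exact div_nonpos_of_nonpos_of_nonneg (neg_nonpos.mpr (by positivity)) (by positivity)
    have h3 : (Real.sqrt (2 * π * (v':ℝ)))⁻¹ ≤ (Real.sqrt (2 * π * v))⁻¹ := by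
      apply inv_anti₀ hs
      apply Real.sqrt_le_sqrt
      have : (0:ℝ) < π := Real.pi_pos
      nlinarith
    calc (Real.sqrt (2 * π * (v':ℝ)))⁻¹ * rexp (- (x - 0)^2 / (2 * (v':ℝ)))
        ≤ (Real.sqrt (2 * π * (v':ℝ)))⁻¹ * 1 := by
          apply mul_le_mul_of_nonneg_left h2
          positivity
      _ = (Real.sqrt (2 * π * (v':ℝ)))⁻¹ := mul_one _
      _ ≤ (Real.sqrt (2 * π * v))⁻¹ := h3
  rw [gaussianReal_apply 0 hv'0]
  calc ∫⁻ x in Set.Icc (-δ) δ, gaussianPDF 0 v' x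
      ≤ ∫⁻ _ in Set.Icc (-δ) δ, ENNReal.ofReal ((Real.sqrt (2 * π * v))⁻¹) :=
        lintegral_mono fun x => hb x
    _ = ENNReal.ofReal ((Real.sqrt (2 * π * v))⁻¹) * volume (Set.Icc (-δ) δ) :=
        setLIntegral_const _ _
    _ = ENNReal.ofReal ((Real.sqrt (2 * π * v))⁻¹) * ENNReal.ofReal (2 * δ) := by
        rw [Real.volume_Icc]
        congr 1
        ring
    _ = ENNReal.ofReal (2 * δ / Real.sqrt (2 * π * v)) := by
        rw [← ENNReal.ofReal_mul (by positivity)]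
        congr 1
        field_simp

/-- let `g` be an a.s. `C¹` Gaussian process on `[-M,M]` with
continuous covariance, variance bounded below, and the tail bound
`P(max |g'| ≥ T) ≤ e^M/T`.  Then for any `k` intervals in `[-M,M]` of length at
most `√ε`, the sum of the probabilities that `|g| ≤ ε` somewhere on the interval
is `O(ε^(1/4))`, uniformly over the choice of intervals. -/
theorem small_value_on_short_intervals
    {Ω : Type*} [MeasurableSpace Ω] (P : Measure Ω) [IsProbabilityMeasure P]
    (M : ℝ) (hM : 0 < M) (g : Ω → ℝ → ℝ)
    (hC1 : ∀ᵐ ω ∂P, ContDiff ℝ 1 (g ω))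
    (hgauss : ∀ (m : ℕ) (c : Fin m → ℝ) (x : Fin m → ℝ),
      P.map (fun ω => ∑ i, c i * g ω (x i)) =
        gaussianReal 0 (∑ i, ∑ j, c i * c j * ∫ ω, g ω (x i) * g ω (x j) ∂P).toNNReal)
    (hcov : Continuous (fun p : ℝ × ℝ => ∫ ω, g ω p.1 * g ω p.2 ∂P))
    (v : ℝ) (hv : 0 < v)
    (hvar : ∀ x ∈ Set.Icc (-M) M, v ≤ ∫ ω, (g ω x) ^ 2 ∂P)
    (htail : ∀ T : ℝ, 0 < T →
      P {ω | T ≤ sSup ((fun t : ℝ => |deriv (g ω) t|) '' Set.Icc (-M) M)}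
        ≤ ENNReal.ofReal (Real.exp M / T))
    (k : ℕ) (hk : 0 < k) :
    ∃ C > (0:ℝ), ∃ ε₀ > (0:ℝ), ∀ ε : ℝ, 0 < ε → ε ≤ ε₀ →
      ∀ a b : Fin k → ℝ,
      (∀ j, Set.Icc (a j) (b j) ⊆ Set.Icc (-M) M) →
      (∀ j, b j - a j ≤ ε ^ ((1:ℝ)/2)) →
      ∑ j, P {ω | ∃ x ∈ Set.Icc (a j) (b j), |g ω x| ≤ ε}
        ≤ ENNReal.ofReal (C * ε ^ ((1:ℝ)/4)) := by
  set s : ℝ := Real.sqrt (2 * π * v) with hs_def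
  have hs : 0 < s := Real.sqrt_pos.mpr (by positivity)
  set c₀ : ℝ := Real.exp M + 4 / s with hc₀_def
  have hc₀ : 0 < c₀ := by positivity
  refine ⟨k * c₀, by positivity, 1, one_pos, ?_⟩
  intro ε hε hε1 a b hsub hlen
  set q : ℝ := ε ^ ((1:ℝ)/4) with hq_def
  have hq : 0 < q := Real.rpow_pos_of_pos hε _
  have hεq : ε ≤ q := by
    calc ε = ε ^ ((1:ℝ)) := (Real.rpow_one ε).symm
      _ ≤ ε ^ ((1:ℝ)/4) := Real.rpow_le_rpow_of_exponent_ge hε hε1 (by norm_num)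
  set T : ℝ := q⁻¹ with hT_def
  have hT : 0 < T := by positivity
  set δ : ℝ := 2 * q with hδ_def
  have hδ : 0 ≤ δ := by positivity
  have key : ∀ j, P {ω | ∃ x ∈ Set.Icc (a j) (b j), |g ω x| ≤ ε}
      ≤ ENNReal.ofReal (c₀ * q) := by
    intro j
    rcases lt_or_ge (b j) (a j) with hab | hab
    · have hempty : {ω | ∃ x ∈ Set.Icc (a j) (b j), |g ω x| ≤ ε} = ∅ := by
        ext ω
        simp [Set.Icc_eq_empty_of_lt hab]
      rw [hempty, measure_empty]
      exact zero_le
    · have haM : a j ∈ Set.Icc (-M) M := hsub j ⟨le_refl _, hab⟩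
      set A : Set Ω := {ω | T ≤ sSup ((fun t : ℝ => |deriv (g ω) t|) '' Set.Icc (-M) M)}
        with hA_def
      set B : Set Ω := (fun ω => g ω (a j)) ⁻¹' Set.Icc (-δ) δ with hB_def
      -- a.e. inclusion
      have hincl : {ω | ∃ x ∈ Set.Icc (a j) (b j), |g ω x| ≤ ε} ≤ᵐ[P] (A ∪ B : Set Ω) := by
        filter_upwards [hC1] with ω hω hE
        obtain ⟨x, hx, hgx⟩ := hE
        by_cases hA : T ≤ sSup ((fun t : ℝ => |deriv (g ω) t|) '' Set.Icc (-M) M)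
        · exact Or.inl hA
        · right
          push_neg at hA
          have hcont : Continuous (deriv (g ω)) := hω.continuous_deriv le_rfl
          have hbdd : BddAbove ((fun t : ℝ => |deriv (g ω) t|) '' Set.Icc (-M) M) :=
            (isCompact_Icc.image (continuous_abs.comp hcont)).bddAbove
          have hder : ∀ t ∈ Set.Icc (-M) M, ‖deriv (g ω) t‖ ≤ T := by
            intro t ht
            rw [Real.norm_eq_abs]
            exact le_of_lt (lt_of_le_of_lt (le_csSup hbdd ⟨t, ht, rfl⟩) hA)
          have hmvt : ‖g ω (a j) - g ω x‖ ≤ T * ‖a j - x‖ :=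
            (convex_Icc (-M) M).norm_image_sub_le_of_norm_hasDerivWithin_le
              (fun t _ => ((hω.differentiable one_ne_zero) t).hasDerivAt.hasDerivWithinAt)
              hder (hsub j hx) haM
          have h1 : ‖a j - x‖ ≤ ε ^ ((1:ℝ)/2) := by
            rw [Real.norm_eq_abs, abs_sub_comm, abs_of_nonneg (by linarith [hx.1])]
            linarith [hx.2, hlen j]
          have hTq : T * ε ^ ((1:ℝ)/2) = q := by
            rw [hT_def, hq_def, ← Real.rpow_neg hε.le]
            rw [← Real.rpow_add hε]
            norm_num
          have h2 : |g ω (a j) - g ω x| ≤ q := by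
            rw [← hTq]
            calc ‖g ω (a j) - g ω x‖ ≤ T * ‖a j - x‖ := hmvt
              _ ≤ T * ε ^ ((1:ℝ)/2) := by
                  apply mul_le_mul_of_nonneg_left h1 hT.le
          have h3 : |g ω (a j)| ≤ δ := by
            calc |g ω (a j)| ≤ |g ω (a j) - g ω x| + |g ω x| := by
                  have := abs_add_le (g ω (a j) - g ω x) (g ω x)
                  simpa using this
              _ ≤ q + ε := add_le_add h2 hgx
              _ ≤ q + q := by linarith
              _ = δ := by rw [hδ_def]; ring
          rw [hB_def]
          simp only [Set.mem_preimage, Set.mem_Icc]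
          exact abs_le.mp h3
      -- bound on A
      have hA' : P A ≤ ENNReal.ofReal (Real.exp M * q) := by
        have := htail T hT
        rw [hT_def, div_eq_mul_inv, inv_inv] at this
        exact this
      -- bound on B
      have hB' : P B ≤ ENNReal.ofReal (2 * δ / s) := by
        have hm := hgauss 1 (fun _ => (1:ℝ)) (fun _ => a j)
        simp only [Fin.sum_univ_one, one_mul] at hm
        set W : ℝ≥0 := (∫ ω, g ω (a j) * g ω (a j) ∂P).toNNReal with hW_def
        have hint : v ≤ ∫ ω, g ω (a j) * g ω (a j) ∂P := by
          have := hvar (a j) haM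
          simp_rw [sq] at this
          exact this
        have hvW : v ≤ (W : ℝ) := by
          rw [hW_def, Real.coe_toNNReal']
          exact le_max_of_le_left hint
        have haem : AEMeasurable (fun ω => g ω (a j)) P := by
          by_contra h
          rw [Measure.map_of_not_aemeasurable h] at hm
          have h1 := measure_univ (μ := gaussianReal 0 W)
          rw [← hm] at h1
          simp at h1
        have hPB : P B = (P.map (fun ω => g ω (a j))) (Set.Icc (-δ) δ) :=
          (Measure.map_apply_of_aemeasurable haem measurableSet_Icc).symm
        rw [hPB, hm]
        exact gauss_smallball v hv W hvW δ hδ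
      calc P {ω | ∃ x ∈ Set.Icc (a j) (b j), |g ω x| ≤ ε}
          ≤ P (A ∪ B) := measure_mono_ae hincl
        _ ≤ P A + P B := measure_union_le _ _
        _ ≤ ENNReal.ofReal (Real.exp M * q) + ENNReal.ofReal (2 * δ / s) :=
            add_le_add hA' hB'
        _ = ENNReal.ofReal (Real.exp M * q + 2 * δ / s) :=
            (ENNReal.ofReal_add (by positivity) (by positivity)).symm
        _ = ENNReal.ofReal (c₀ * q) := by
            congr 1
            rw [hc₀_def, hδ_def]
            field_simp
            ring
  calc ∑ j, P {ω | ∃ x ∈ Set.Icc (a j) (b j), |g ω x| ≤ ε}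
      ≤ ∑ _j : Fin k, ENNReal.ofReal (c₀ * q) := Finset.sum_le_sum fun j _ => key j
    _ = (k : ℝ≥0∞) * ENNReal.ofReal (c₀ * q) := by
        rw [Finset.sum_const, Finset.card_univ, Fintype.card_fin, nsmul_eq_mul]
    _ = ENNReal.ofReal ((k : ℝ) * (c₀ * q)) := by
        rw [← ENNReal.ofReal_natCast k, ← ENNReal.ofReal_mul (by positivity)]
    _ = ENNReal.ofReal ((k : ℝ) * c₀ * ε ^ ((1:ℝ)/4)) := by rw [hq_def, mul_assoc]
end

section
/- Let x, y be fixed real numbers and i, j nonnegative integers. Then n^{-(1+i+j)} ∑_{r=0}^{n} (r)_i (r)_j (-1)^r (1 + x/n)^r (1 + y/n)^r → 0 as n → ∞. -/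
open Filter Real

lemma abs_neg_one_geom_sum' (m : ℕ) : |∑ k ∈ Finset.range m, (-1:ℝ)^k| ≤ 1 := by
  rw [neg_one_geom_sum]
  split_ifs <;> simp

lemma descFactorial_succ_real (r k : ℕ) :
    ((r+1).descFactorial k : ℝ) = (r.descFactorial k : ℝ) + k * (r.descFactorial (k-1) : ℝ) := by
  cases k with
  | zero => simp
  | succ k' =>
    rcases le_or_gt k' r with h | h
    · have h1 : (r+1).descFactorial (k'+1) = (r+1) * r.descFactorial k' :=
        Nat.succ_descFactorial_succ r k'
      have h2 : r.descFactorial (k'+1) = (r - k') * r.descFactorial k' :=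
        Nat.descFactorial_succ r k'
      simp only [Nat.add_sub_cancel, h1, h2]
      push_cast [h]
      ring
    · have h1 : r.descFactorial k' = 0 := Nat.descFactorial_eq_zero_iff_lt.mpr h
      have h2 : r.descFactorial (k'+1) = 0 :=
        Nat.descFactorial_eq_zero_iff_lt.mpr (h.trans (Nat.lt_succ_self k'))
      simp only [Nat.succ_descFactorial_succ, Nat.add_sub_cancel, h1, h2]
      simp

lemma key_bound (x y : ℝ) (i j : ℕ) (n : ℕ) (hn : 1 ≤ n) :
    |∑ r ∈ Finset.range (n + 1),
        (r.descFactorial i : ℝ) * (r.descFactorial j : ℝ) * (-1) ^ r *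
          (1 + x / (n:ℝ)) ^ r * (1 + y / (n:ℝ)) ^ r|
      ≤ (1 + ((i:ℝ) + j + i * j) + (|x| + |y| + |x * y|)) * Real.exp (|x| + |y|)
          * (n:ℝ) ^ (i + j) := by
  set N : ℝ := (n : ℝ) with hNdef
  have hN1 : (1:ℝ) ≤ N := Nat.one_le_cast.mpr hn
  have hN0 : (0:ℝ) < N := lt_of_lt_of_le one_pos hN1
  set q : ℝ := (1 + x / N) * (1 + y / N) with hqdef
  set p : ℕ → ℝ := fun r => (r.descFactorial i : ℝ) * (r.descFactorial j : ℝ) with hpdef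
  set E : ℝ := Real.exp (|x| + |y|) with hEdef
  set K : ℝ := |x| + |y| + |x * y| with hKdef
  have hE0 : (0:ℝ) < E := Real.exp_pos _
  have hK0 : (0:ℝ) ≤ K := by positivity
  -- |q^r| ≤ E for r ≤ n
  have hqpow : ∀ r, r ≤ n → |q ^ r| ≤ E := by
    intro r hr
    have hx1 : (1:ℝ) ≤ 1 + |x| / N := le_add_of_nonneg_right (by positivity)
    have hy1 : (1:ℝ) ≤ 1 + |y| / N := le_add_of_nonneg_right (by positivity)
    have h1 : |q| ≤ (1 + |x| / N) * (1 + |y| / N) := by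
      rw [hqdef, abs_mul]
      have ha : |1 + x / N| ≤ 1 + |x| / N := by
        calc |1 + x / N| ≤ |(1:ℝ)| + |x / N| := abs_add_le _ _
        _ = 1 + |x| / N := by rw [abs_one, abs_div, abs_of_pos hN0]
      have hb : |1 + y / N| ≤ 1 + |y| / N := by
        calc |1 + y / N| ≤ |(1:ℝ)| + |y / N| := abs_add_le _ _
        _ = 1 + |y| / N := by rw [abs_one, abs_div, abs_of_pos hN0]
      exact mul_le_mul ha hb (abs_nonneg _) (by linarith)
    have hble : (1 + |x| / N) * (1 + |y| / N) ≤ Real.exp ((|x| + |y|) / N) := by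
      rw [show (|x| + |y|) / N = |x| / N + |y| / N by ring, Real.exp_add]
      have e1 : 1 + |x| / N ≤ Real.exp (|x| / N) := by
        have := Real.add_one_le_exp (|x| / N); linarith
      have e2 : 1 + |y| / N ≤ Real.exp (|y| / N) := by
        have := Real.add_one_le_exp (|y| / N); linarith
      exact mul_le_mul e1 e2 (by linarith) (le_of_lt (Real.exp_pos _))
    calc |q ^ r| = |q| ^ r := abs_pow q r
    _ ≤ ((1 + |x| / N) * (1 + |y| / N)) ^ r := pow_le_pow_left₀ (abs_nonneg q) h1 r
    _ ≤ ((1 + |x| / N) * (1 + |y| / N)) ^ n := by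
        apply pow_le_pow_right₀ _ hr
        nlinarith
    _ ≤ (Real.exp ((|x| + |y|) / N)) ^ n := pow_le_pow_left₀ (by positivity) hble n
    _ = Real.exp ((n:ℕ) * ((|x| + |y|) / N)) := by rw [← Real.exp_nat_mul]
    _ = E := by
        rw [hEdef]
        congr 1
        rw [← hNdef, mul_comm, div_mul_cancel₀ _ hN0.ne']
  -- p bounds
  have hp_nonneg : ∀ r, 0 ≤ p r := fun r => by positivity
  have hdesc_le : ∀ (r k : ℕ), r ≤ n → (r.descFactorial k : ℝ) ≤ N ^ k := by
    intro r k hr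
    calc (r.descFactorial k : ℝ) ≤ (r:ℝ) ^ k := by exact_mod_cast Nat.descFactorial_le_pow r k
    _ ≤ N ^ k := pow_le_pow_left₀ (Nat.cast_nonneg r) (Nat.cast_le.mpr hr) k
  have hp_le : ∀ r, r ≤ n → p r ≤ N ^ (i + j) := by
    intro r hr
    calc p r ≤ N ^ i * N ^ j :=
      mul_le_mul (hdesc_le r i hr) (hdesc_le r j hr) (Nat.cast_nonneg _) (by positivity)
    _ = N ^ (i + j) := (pow_add N i j).symm
  -- difference of p
  have hpdiff : ∀ r, r + 1 ≤ n → (p (r+1) - p r) * N ≤ ((i:ℝ) + j + i * j) * N ^ (i + j) := by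
    intro r hr
    have hr1 : r ≤ n := le_trans (Nat.le_succ r) hr
    have hr2 : r + 1 ≤ n := hr
    have expand : p (r+1) - p r =
        (i:ℝ) * (r.descFactorial (i-1) : ℝ) * (r.descFactorial j : ℝ)
        + (j:ℝ) * (r.descFactorial i : ℝ) * (r.descFactorial (j-1) : ℝ)
        + (i:ℝ) * (j:ℝ) * (r.descFactorial (i-1) : ℝ) * (r.descFactorial (j-1) : ℝ) := by
      simp only [hpdef]
      rw [descFactorial_succ_real r i, descFactorial_succ_real r j]
      ring
    have c1 : (i:ℝ) * (r.descFactorial (i-1) : ℝ) * (r.descFactorial j : ℝ) * N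
        ≤ (i:ℝ) * N ^ (i + j) := by
      cases i with
      | zero => simp
      | succ i' =>
        simp only [Nat.add_sub_cancel]
        calc ((i'+1 : ℕ):ℝ) * (r.descFactorial i' : ℝ) * (r.descFactorial j : ℝ) * N
            ≤ ((i'+1 : ℕ):ℝ) * N ^ i' * N ^ j * N := by
              gcongr <;> [exact hdesc_le r i' hr1; exact hdesc_le r j hr1]
        _ = ((i'+1 : ℕ):ℝ) * N ^ (i' + 1 + j) := by
            rw [show i' + 1 + j = (i' + j) + 1 from by omega, pow_succ, pow_add]; ring
    have c2 : (j:ℝ) * (r.descFactorial i : ℝ) * (r.descFactorial (j-1) : ℝ) * N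
        ≤ (j:ℝ) * N ^ (i + j) := by
      cases j with
      | zero => simp
      | succ j' =>
        simp only [Nat.add_sub_cancel]
        calc ((j'+1 : ℕ):ℝ) * (r.descFactorial i : ℝ) * (r.descFactorial j' : ℝ) * N
            ≤ ((j'+1 : ℕ):ℝ) * N ^ i * N ^ j' * N := by
              gcongr <;> [exact hdesc_le r i hr1; exact hdesc_le r j' hr1]
        _ = ((j'+1 : ℕ):ℝ) * N ^ (i + (j' + 1)) := by
            rw [show i + (j' + 1) = (i + j') + 1 from by omega, pow_succ, pow_add]; ring
    have c3 : (i:ℝ) * (j:ℝ) * (r.descFactorial (i-1) : ℝ) * (r.descFactorial (j-1) : ℝ) * N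
        ≤ (i:ℝ) * (j:ℝ) * N ^ (i + j) := by
      cases i with
      | zero => simp
      | succ i' =>
        cases j with
        | zero => simp
        | succ j' =>
          simp only [Nat.add_sub_cancel]
          calc ((i'+1:ℕ):ℝ) * ((j'+1:ℕ):ℝ) * (r.descFactorial i' : ℝ)
                * (r.descFactorial j' : ℝ) * N
              ≤ ((i'+1:ℕ):ℝ) * ((j'+1:ℕ):ℝ) * N ^ i' * N ^ j' * N := by
                gcongr <;> [exact hdesc_le r i' hr1; exact hdesc_le r j' hr1]
          _ = ((i'+1:ℕ):ℝ) * ((j'+1:ℕ):ℝ) * N ^ (i' + j' + 1) := by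
              rw [pow_succ, pow_add]; ring
          _ ≤ ((i'+1:ℕ):ℝ) * ((j'+1:ℕ):ℝ) * N ^ (i' + 1 + (j' + 1)) := by
              have := pow_le_pow_right₀ hN1 (show i' + j' + 1 ≤ i' + 1 + (j' + 1) from by omega)
                (a := N)
              exact mul_le_mul_of_nonneg_left this (by positivity)
    calc (p (r+1) - p r) * N
        = (i:ℝ) * (r.descFactorial (i-1) : ℝ) * (r.descFactorial j : ℝ) * N
        + (j:ℝ) * (r.descFactorial i : ℝ) * (r.descFactorial (j-1) : ℝ) * N
        + (i:ℝ) * (j:ℝ) * (r.descFactorial (i-1) : ℝ) * (r.descFactorial (j-1) : ℝ) * N := by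
          rw [expand]; ring
    _ ≤ (i:ℝ) * N ^ (i + j) + (j:ℝ) * N ^ (i + j) + (i:ℝ) * (j:ℝ) * N ^ (i + j) :=
        add_le_add (add_le_add c1 c2) c3
    _ = ((i:ℝ) + j + i * j) * N ^ (i + j) := by ring
  -- |q - 1| ≤ K / N
  have hq1 : |q - 1| ≤ K / N := by
    have heq : q - 1 = (x + y) / N + (x * y) / (N * N) := by
      rw [hqdef]; field_simp; ring
    calc |q - 1| = |(x + y) / N + (x * y) / (N * N)| := by rw [heq]
    _ ≤ |(x + y) / N| + |(x * y) / (N * N)| := abs_add_le _ _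
    _ = |x + y| / N + |x * y| / (N * N) := by
        rw [abs_div, abs_div, abs_of_pos hN0, abs_of_pos (by positivity : (0:ℝ) < N * N)]
    _ ≤ (|x| + |y|) / N + |x * y| / N := by
        gcongr
        · exact abs_add_le x y
        · nlinarith
    _ = K / N := by rw [hKdef]; ring
  -- difference of a
  have hdiff : ∀ r, r + 1 ≤ n →
      |p (r+1) * q ^ (r+1) - p r * q ^ r| ≤ (((i:ℝ) + j + i * j) + K) * N ^ (i + j) * E / N := by
    intro r hr
    have hr1 : r ≤ n := le_trans (Nat.le_succ r) hr
    have key : p (r+1) * q ^ (r+1) - p r * q ^ r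
        = (p (r+1) - p r) * q ^ (r+1) + p r * (q ^ r * (q - 1)) := by
      rw [pow_succ]; ring
    have t1 : |(p (r+1) - p r) * q ^ (r+1)| ≤ ((i:ℝ) + j + i * j) * N ^ (i + j) * E / N := by
      rw [abs_mul]
      have hpd0 : 0 ≤ p (r+1) - p r := by
        simp only [hpdef]
        apply sub_nonneg.mpr
        exact mul_le_mul (by exact_mod_cast Nat.descFactorial_le i r.le_succ)
          (by exact_mod_cast Nat.descFactorial_le j r.le_succ) (Nat.cast_nonneg _)
          (Nat.cast_nonneg _)
      rw [abs_of_nonneg hpd0]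
      have h2 := hqpow (r+1) hr
      have h1 := hpdiff r hr
      calc (p (r+1) - p r) * |q ^ (r+1)| ≤ (p (r+1) - p r) * E :=
        mul_le_mul_of_nonneg_left h2 hpd0
      _ ≤ (((i:ℝ) + j + i * j) * N ^ (i + j) / N) * E := by
          apply mul_le_mul_of_nonneg_right _ hE0.le
          rw [le_div_iff₀ hN0]
          exact h1
      _ = ((i:ℝ) + j + i * j) * N ^ (i + j) * E / N := by ring
    have t2 : |p r * (q ^ r * (q - 1))| ≤ K * N ^ (i + j) * E / N := by
      rw [abs_mul (p r), abs_of_nonneg (hp_nonneg r), abs_mul]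
      have step : p r * (|q ^ r| * |q - 1|) ≤ N ^ (i + j) * (E * (K / N)) :=
        mul_le_mul (hp_le r hr1)
          (mul_le_mul (hqpow r hr1) hq1 (abs_nonneg _) hE0.le)
          (by positivity) (by positivity)
      calc p r * (|q ^ r| * |q - 1|) ≤ N ^ (i + j) * (E * (K / N)) := step
      _ = K * N ^ (i + j) * E / N := by ring
    calc |p (r+1) * q ^ (r+1) - p r * q ^ r|
        = |(p (r+1) - p r) * q ^ (r+1) + p r * (q ^ r * (q - 1))| := by rw [key]
    _ ≤ |(p (r+1) - p r) * q ^ (r+1)| + |p r * (q ^ r * (q - 1))| := abs_add_le _ _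
    _ ≤ ((i:ℝ) + j + i * j) * N ^ (i + j) * E / N + K * N ^ (i + j) * E / N := add_le_add t1 t2
    _ = (((i:ℝ) + j + i * j) + K) * N ^ (i + j) * E / N := by ring
  -- rewrite sum and apply summation by parts
  have hsum : ∑ r ∈ Finset.range (n + 1),
      (r.descFactorial i : ℝ) * (r.descFactorial j : ℝ) * (-1) ^ r *
        (1 + x / N) ^ r * (1 + y / N) ^ r
      = ∑ r ∈ Finset.range (n + 1), (fun s => p s * q ^ s) r • ((-1:ℝ)) ^ r := by
    refine Finset.sum_congr rfl fun r _ => ?_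
    simp only [smul_eq_mul, hpdef, hqdef, mul_pow]
    ring
  rw [hsum, Finset.sum_range_by_parts (fun s => p s * q ^ s) (fun r => (-1:ℝ)^r) (n+1)]
  simp only [Nat.add_sub_cancel, smul_eq_mul]
  have term1 : |p n * q ^ n * ∑ k ∈ Finset.range (n+1), (-1:ℝ)^k| ≤ N ^ (i + j) * E := by
    rw [abs_mul (p n * q ^ n), abs_mul (p n), abs_of_nonneg (hp_nonneg n)]
    calc p n * |q ^ n| * |∑ k ∈ Finset.range (n+1), (-1:ℝ)^k|
        ≤ N ^ (i + j) * E * 1 := by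
          apply mul_le_mul _ (abs_neg_one_geom_sum' _) (abs_nonneg _) (by positivity)
          exact mul_le_mul (hp_le n le_rfl) (hqpow n le_rfl) (abs_nonneg _) (by positivity)
    _ = N ^ (i + j) * E := mul_one _
  have term2 : |∑ r ∈ Finset.range n, (p (r+1) * q ^ (r+1) - p r * q ^ r)
        * ∑ k ∈ Finset.range (r+1), (-1:ℝ)^k|
      ≤ (((i:ℝ) + j + i * j) + K) * N ^ (i + j) * E := by
    calc |∑ r ∈ Finset.range n, (p (r+1) * q ^ (r+1) - p r * q ^ r)
          * ∑ k ∈ Finset.range (r+1), (-1:ℝ)^k|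
        ≤ ∑ r ∈ Finset.range n, |(p (r+1) * q ^ (r+1) - p r * q ^ r)
          * ∑ k ∈ Finset.range (r+1), (-1:ℝ)^k| := Finset.abs_sum_le_sum_abs _ _
    _ ≤ ∑ r ∈ Finset.range n, (((i:ℝ) + j + i * j) + K) * N ^ (i + j) * E / N := by
        apply Finset.sum_le_sum
        intro r hrmem
        have hr : r + 1 ≤ n := Finset.mem_range.mp hrmem
        rw [abs_mul]
        calc |p (r+1) * q ^ (r+1) - p r * q ^ r| * |∑ k ∈ Finset.range (r+1), (-1:ℝ)^k|
            ≤ ((((i:ℝ) + j + i * j) + K) * N ^ (i + j) * E / N) * 1 :=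
              mul_le_mul (hdiff r hr) (abs_neg_one_geom_sum' _) (abs_nonneg _) (by positivity)
        _ = (((i:ℝ) + j + i * j) + K) * N ^ (i + j) * E / N := mul_one _
    _ = n * ((((i:ℝ) + j + i * j) + K) * N ^ (i + j) * E / N) := by
        rw [Finset.sum_const, Finset.card_range, nsmul_eq_mul]
    _ = (((i:ℝ) + j + i * j) + K) * N ^ (i + j) * E := by
        rw [← hNdef]; field_simp
  calc |p n * q ^ n * ∑ k ∈ Finset.range (n+1), (-1:ℝ)^k
        - ∑ r ∈ Finset.range n, (p (r+1) * q ^ (r+1) - p r * q ^ r)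
          * ∑ k ∈ Finset.range (r+1), (-1:ℝ)^k|
      ≤ |p n * q ^ n * ∑ k ∈ Finset.range (n+1), (-1:ℝ)^k|
        + |∑ r ∈ Finset.range n, (p (r+1) * q ^ (r+1) - p r * q ^ r)
          * ∑ k ∈ Finset.range (r+1), (-1:ℝ)^k| := abs_sub _ _
  _ ≤ N ^ (i + j) * E + (((i:ℝ) + j + i * j) + K) * N ^ (i + j) * E := add_le_add term1 term2
  _ = (1 + ((i:ℝ) + j + i * j) + K) * E * N ^ (i + j) := by ring

/-- the alternating-sign cross-covariance sum tends to `0`: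
`n^{-(1+i+j)} ∑_{r=0}^n (r)_i (r)_j (-1)^r (1+x/n)^r (1+y/n)^r → 0`. -/
theorem cross_covariance_vanishes (x y : ℝ) (i j : ℕ) :
    Tendsto (fun n : ℕ =>
        (1 / (n : ℝ) ^ (1 + i + j)) *
          ∑ r ∈ Finset.range (n + 1),
            (r.descFactorial i : ℝ) * (r.descFactorial j : ℝ) * (-1) ^ r *
              (1 + x / n) ^ r * (1 + y / n) ^ r)
      atTop (nhds 0) := by
  set M : ℝ := (1 + ((i:ℝ) + j + i * j) + (|x| + |y| + |x * y|)) * Real.exp (|x| + |y|) with hM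
  have hM0 : 0 ≤ M := by positivity
  have h0 : Tendsto (fun n : ℕ => M / (n:ℝ)) atTop (nhds 0) :=
    tendsto_const_div_atTop_nhds_zero_nat M
  refine squeeze_zero_norm' ?_ h0
  filter_upwards [eventually_ge_atTop 1] with n hn
  have hb := key_bound x y i j n hn
  have hN0 : (0:ℝ) < n := by exact_mod_cast hn
  rw [Real.norm_eq_abs, abs_mul,
    abs_of_nonneg (by positivity : (0:ℝ) ≤ 1 / (n : ℝ) ^ (1 + i + j))]
  calc 1 / (n:ℝ) ^ (1 + i + j) * |∑ r ∈ Finset.range (n + 1),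
        (r.descFactorial i : ℝ) * (r.descFactorial j : ℝ) * (-1) ^ r *
          (1 + x / n) ^ r * (1 + y / n) ^ r|
      ≤ 1 / (n:ℝ) ^ (1 + i + j) * (M * (n:ℝ) ^ (i + j)) := by
        apply mul_le_mul_of_nonneg_left _ (by positivity)
        exact hb
  _ = M / (n:ℝ) := by
      have h1 : (1:ℕ) + i + j = (i + j) + 1 := by omega
      rw [h1, pow_succ]
      field_simp
end

section
/- Let g be the mean-zero Gaussian process with covariance K(x,y) = ∫_0^1 e^{(x+y)t} dt, and for x ≠ y let Σ(x,y) be the 2×2 covariance matrix of (g(x), g(y)). Then det Σ(x,y) = (x-y)^2 · det Cov(g(x), (g(x)-g(y))/(x-y)), and as δ → 0, uniformly for x, y ∈ [-δ, δ] with x ≠ y, det Σ(x,y) = (x-y)^2 (1 + o(1)) · det Cov(g(0), g'(0)); in particular there exist c > 0 and δ_0 > 0 such that det Σ(x,y) ≥ c (x-y)^2 for all distinct x, y ∈ [-δ_0, δ_0]. -/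
open Real

lemma abs_int_le {f : ℝ → ℝ} {C : ℝ} (h : ∀ t ∈ Set.Icc (0:ℝ) 1, |f t| ≤ C) :
    |∫ t in (0:ℝ)..1, f t| ≤ C := by
  have := intervalIntegral.norm_integral_le_of_norm_le_const (a := 0) (b := 1) (C := C) (f := f)
    (fun t ht => by
      rw [Set.uIoc_of_le zero_le_one] at ht
      exact h t ⟨ht.1.le, ht.2⟩)
  simpa using this

lemma exp_ut_bound {u t : ℝ} (hu : |u| ≤ 1) (ht : t ∈ Set.Icc (0:ℝ) 1) :
    |Real.exp (u*t)| ≤ 3 := by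
  rw [abs_of_pos (Real.exp_pos _)]
  have ht1 : |t| ≤ 1 := abs_le.2 ⟨by linarith [ht.1], ht.2⟩
  have h1 : u*t ≤ 1 := by
    calc u*t ≤ |u*t| := le_abs_self _
    _ = |u| * |t| := abs_mul _ _
    _ ≤ 1*1 := mul_le_mul hu ht1 (abs_nonneg _) zero_le_one
    _ = 1 := by ring
  calc Real.exp (u*t) ≤ Real.exp 1 := Real.exp_le_exp.2 h1
  _ ≤ 3 := by linarith [Real.exp_one_lt_d9]

lemma exp_cubic {z : ℝ} (hz : |z| ≤ 1) : |Real.exp z - 1 - z - z^2/2| ≤ (2/9) * |z|^3 := by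
  have h := Real.exp_bound hz (n := 3) (by norm_num)
  have hs : (∑ m ∈ Finset.range 3, z ^ m / (m.factorial : ℝ)) = 1 + z + z^2/2 := by
    norm_num [Finset.sum_range_succ]
  rw [hs] at h
  have he : Real.exp z - 1 - z - z^2/2 = Real.exp z - (1 + z + z^2/2) := by ring
  rw [he]
  calc |Real.exp z - (1 + z + z^2/2)| ≤ |z|^3 * ((3:ℕ).succ / ((3:ℕ).factorial * 3)) := h
  _ = (2/9) * |z|^3 := by norm_num [Nat.factorial]; ring

lemma expand (u v : ℝ) (hu : |u| ≤ 1) (hv : |v| ≤ 1) :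
    ∃ R : ℝ, |R| ≤ |v|^3 ∧
    (∫ t in (0:ℝ)..1, Real.exp ((u+v)*t)) =
      (∫ t in (0:ℝ)..1, Real.exp (u*t)) + v * (∫ t in (0:ℝ)..1, t * Real.exp (u*t))
      + v^2/2 * (∫ t in (0:ℝ)..1, t^2 * Real.exp (u*t)) + R := by
  have i1 : IntervalIntegrable (fun t => Real.exp (u*t)) MeasureTheory.volume 0 1 :=
    (by fun_prop : Continuous fun t : ℝ => Real.exp (u*t)).intervalIntegrable 0 1
  have i2 : IntervalIntegrable (fun t : ℝ => v * (t * Real.exp (u*t))) MeasureTheory.volume 0 1 :=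
    (by fun_prop : Continuous fun t : ℝ => v * (t * Real.exp (u*t))).intervalIntegrable 0 1
  have i3 : IntervalIntegrable (fun t : ℝ => v^2/2 * (t^2 * Real.exp (u*t))) MeasureTheory.volume 0 1 :=
    (by fun_prop : Continuous fun t : ℝ => v^2/2 * (t^2 * Real.exp (u*t))).intervalIntegrable 0 1
  have i4 : IntervalIntegrable
      (fun t : ℝ => (Real.exp (v*t) - 1 - v*t - (v*t)^2/2) * Real.exp (u*t)) MeasureTheory.volume 0 1 :=
    (by fun_prop : Continuous fun t : ℝ =>
      (Real.exp (v*t) - 1 - v*t - (v*t)^2/2) * Real.exp (u*t)).intervalIntegrable 0 1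
  refine ⟨∫ t in (0:ℝ)..1, (Real.exp (v*t) - 1 - v*t - (v*t)^2/2) * Real.exp (u*t), ?_, ?_⟩
  · apply abs_int_le
    intro t ht
    have ht1 : |t| ≤ 1 := abs_le.2 ⟨by linarith [ht.1], ht.2⟩
    have hvt : |v*t| ≤ 1 := by
      rw [abs_mul]
      calc |v| * |t| ≤ 1 * 1 := mul_le_mul hv ht1 (abs_nonneg _) zero_le_one
      _ = 1 := by ring
    rw [abs_mul]
    have h1 := exp_cubic hvt
    have h2 := exp_ut_bound hu ht
    have h3 : |v*t|^3 ≤ |v|^3 := by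
      rw [abs_mul, mul_pow]
      have : |t|^3 ≤ 1 := by
        calc |t|^3 ≤ 1^3 := pow_le_pow_left₀ (abs_nonneg t) ht1 3
        _ = 1 := one_pow 3
      nlinarith [pow_nonneg (abs_nonneg v) 3, pow_nonneg (abs_nonneg t) 3]
    nlinarith [abs_nonneg (Real.exp (v*t) - 1 - v*t - (v*t)^2/2), abs_nonneg (Real.exp (u*t)),
      pow_nonneg (abs_nonneg v) 3]
  · have key : ∀ t : ℝ, Real.exp ((u+v)*t) =
        Real.exp (u*t) + v * (t * Real.exp (u*t)) + v^2/2 * (t^2 * Real.exp (u*t))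
        + (Real.exp (v*t) - 1 - v*t - (v*t)^2/2) * Real.exp (u*t) := by
      intro t
      rw [show (u+v)*t = v*t + u*t by ring, Real.exp_add]
      ring
    have hcongr : (∫ t in (0:ℝ)..1, Real.exp ((u+v)*t)) =
        ∫ t in (0:ℝ)..1, (Real.exp (u*t) + v * (t * Real.exp (u*t))
          + v^2/2 * (t^2 * Real.exp (u*t))
          + (Real.exp (v*t) - 1 - v*t - (v*t)^2/2) * Real.exp (u*t)) := by
      congr 1
      ext t
      exact key t
    rw [hcongr, intervalIntegral.integral_add ((i1.add i2).add i3) i4,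
      intervalIntegral.integral_add (i1.add i2) i3, intervalIntegral.integral_add i1 i2,
      intervalIntegral.integral_const_mul, intervalIntegral.integral_const_mul]
lemma deviation_bounds (u : ℝ) (hu : |u| ≤ 1) :
    |(∫ t in (0:ℝ)..1, Real.exp (u*t)) - 1| ≤ 2*|u| ∧
    |(∫ t in (0:ℝ)..1, t * Real.exp (u*t)) - 1/2| ≤ 2*|u| ∧
    |(∫ t in (0:ℝ)..1, t^2 * Real.exp (u*t)) - 1/3| ≤ 2*|u| := by
  have i1 : IntervalIntegrable (fun t => Real.exp (u*t)) MeasureTheory.volume 0 1 :=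
    (by fun_prop : Continuous fun t : ℝ => Real.exp (u*t)).intervalIntegrable 0 1
  have i2 : IntervalIntegrable (fun t : ℝ => t * Real.exp (u*t)) MeasureTheory.volume 0 1 :=
    (by fun_prop : Continuous fun t : ℝ => t * Real.exp (u*t)).intervalIntegrable 0 1
  have i3 : IntervalIntegrable (fun t : ℝ => t^2 * Real.exp (u*t)) MeasureTheory.volume 0 1 :=
    (by fun_prop : Continuous fun t : ℝ => t^2 * Real.exp (u*t)).intervalIntegrable 0 1
  have j1 : IntervalIntegrable (fun _ : ℝ => (1:ℝ)) MeasureTheory.volume 0 1 :=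
    intervalIntegrable_const
  have j2 : IntervalIntegrable (fun t : ℝ => t) MeasureTheory.volume 0 1 :=
    (continuous_id).intervalIntegrable 0 1
  have j3 : IntervalIntegrable (fun t : ℝ => t^2) MeasureTheory.volume 0 1 :=
    (by fun_prop : Continuous fun t : ℝ => t^2).intervalIntegrable 0 1
  have pw : ∀ t ∈ Set.Icc (0:ℝ) 1, |Real.exp (u*t) - 1| ≤ 2*|u| := by
    intro t ht
    have ht1 : |t| ≤ 1 := abs_le.2 ⟨by linarith [ht.1], ht.2⟩
    have hut : |u*t| ≤ 1 := by
      rw [abs_mul]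
      calc |u| * |t| ≤ 1 * 1 := mul_le_mul hu ht1 (abs_nonneg _) zero_le_one
      _ = 1 := by ring
    calc |Real.exp (u*t) - 1| ≤ 2*|u*t| := Real.abs_exp_sub_one_le hut
    _ ≤ 2*|u| := by rw [abs_mul]; nlinarith [abs_nonneg u]
  refine ⟨?_, ?_, ?_⟩
  · have e : (∫ t in (0:ℝ)..1, Real.exp (u*t)) - 1
        = ∫ t in (0:ℝ)..1, (Real.exp (u*t) - 1) := by
      rw [intervalIntegral.integral_sub i1 j1]; simp
    rw [e]
    exact abs_int_le pw
  · have e : (∫ t in (0:ℝ)..1, t * Real.exp (u*t)) - 1/2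
        = ∫ t in (0:ℝ)..1, t * (Real.exp (u*t) - 1) := by
      have : (∫ t in (0:ℝ)..1, t * (Real.exp (u*t) - 1))
          = (∫ t in (0:ℝ)..1, (t * Real.exp (u*t) - t)) := by
        congr 1; ext t; ring
      rw [this, intervalIntegral.integral_sub i2 j2]
      norm_num
    rw [e]
    apply abs_int_le
    intro t ht
    have ht1 : |t| ≤ 1 := abs_le.2 ⟨by linarith [ht.1], ht.2⟩
    rw [abs_mul]
    have := pw t ht
    nlinarith [abs_nonneg (Real.exp (u*t) - 1), abs_nonneg u]
  · have e : (∫ t in (0:ℝ)..1, t^2 * Real.exp (u*t)) - 1/3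
        = ∫ t in (0:ℝ)..1, t^2 * (Real.exp (u*t) - 1) := by
      have : (∫ t in (0:ℝ)..1, t^2 * (Real.exp (u*t) - 1))
          = (∫ t in (0:ℝ)..1, (t^2 * Real.exp (u*t) - t^2)) := by
        congr 1; ext t; ring
      rw [this, intervalIntegral.integral_sub i3 j3]
      norm_num
    rw [e]
    apply abs_int_le
    intro t ht
    have ht1 : |t| ≤ 1 := abs_le.2 ⟨by linarith [ht.1], ht.2⟩
    rw [abs_mul]
    have := pw t ht
    have ht2 : |t^2| ≤ 1 := by rw [abs_pow]; nlinarith [sq_nonneg (1 - |t|), abs_nonneg t]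
    nlinarith [abs_nonneg (Real.exp (u*t) - 1), abs_nonneg u, abs_nonneg (t^2)]

set_option maxHeartbeats 2000000 in
lemma master (u v : ℝ) (hu : |u| ≤ 1) (hv : |v| ≤ 1)
    (J I1 I2 : ℝ)
    (hJ : |J - 1| ≤ 2*|u|) (hI1 : |I1 - 1/2| ≤ 2*|u|) (hI2 : |I2 - 1/3| ≤ 2*|u|)
    (Ra Rb : ℝ) (hRa : |Ra| ≤ |v|^3) (hRb : |Rb| ≤ |v|^3) :
    |(J + v*I1 + v^2/2*I2 + Ra) * (J + (-v)*I1 + v^2/2*I2 + Rb) - J^2 - v^2/12|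
      ≤ 35 * (|u| + |v|) * v^2 := by
  have hu0 : (0:ℝ) ≤ |u| := abs_nonneg u
  have hv0 : (0:ℝ) ≤ |v| := abs_nonneg v
  have hJ3 : |J| ≤ 3 := by
    rw [abs_le]; constructor <;> linarith [abs_le.1 hJ]
  have hI13 : |I1| ≤ 3 := by
    rw [abs_le]; constructor <;> linarith [abs_le.1 hI1]
  have hI23 : |I2| ≤ 3 := by
    rw [abs_le]; constructor <;> linarith [abs_le.1 hI2]
  -- main quadratic term
  have hM : |J*I2 - I1^2 - 1/12| ≤ 15*|u| := by
    obtain ⟨a1, a2⟩ := abs_le.1 hJ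
    obtain ⟨b1, b2⟩ := abs_le.1 hI1
    obtain ⟨c1, c2⟩ := abs_le.1 hI2
    rw [abs_le]
    constructor <;> nlinarith [abs_le.1 hI13, abs_le.1 hI23, abs_le.1 hJ3, sq_nonneg (I1 - 1/2),
      mul_self_nonneg (2*|u|)]
  -- error terms
  have hV3 : |v|^3 ≤ 1 := by nlinarith [pow_nonneg hv0 3, sq_nonneg (1 - |v|)]
  have hV2 : |v|^2 = v^2 := sq_abs v
  have habsum : |Ra + Rb| ≤ 2*|v|^3 := by
    calc |Ra + Rb| ≤ |Ra| + |Rb| := abs_add_le _ _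
    _ ≤ 2*|v|^3 := by linarith
  have habdif : |Rb - Ra| ≤ 2*|v|^3 := by
    calc |Rb - Ra| ≤ |Rb| + |Ra| := abs_sub _ _
    _ ≤ 2*|v|^3 := by linarith
  have hv43 : |v|^4 ≤ |v|^3 := by nlinarith [pow_nonneg hv0 3]
  have hv53 : |v|^5 ≤ |v|^3 := by nlinarith [pow_nonneg hv0 3, pow_nonneg hv0 5, pow_nonneg hv0 4]
  have hv63 : |v|^6 ≤ |v|^3 := by nlinarith [pow_nonneg hv0 3, pow_nonneg hv0 6, pow_nonneg hv0 5, pow_nonneg hv0 4]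
  have e1 : |J*(Ra+Rb)| ≤ 6*|v|^3 := by
    rw [abs_mul]
    calc |J| * |Ra+Rb| ≤ 3 * (2*|v|^3) :=
          mul_le_mul hJ3 habsum (abs_nonneg _) (by norm_num)
    _ = 6*|v|^3 := by ring
  have e2 : |v*I1*(Rb-Ra)| ≤ 6*|v|^3 := by
    rw [abs_mul, abs_mul]
    have h1 : |v| * |I1| ≤ 3 := by
      calc |v| * |I1| ≤ 1 * 3 := mul_le_mul hv hI13 (abs_nonneg _) zero_le_one
      _ = 3 := by ring
    calc |v| * |I1| * |Rb-Ra| ≤ 3 * (2*|v|^3) :=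
          mul_le_mul h1 habdif (abs_nonneg _) (by norm_num)
    _ = 6*|v|^3 := by ring
  have h1v : |v^2/2| = |v|^2/2 := by rw [abs_div, abs_pow]; norm_num
  have h2v : |v|^2/2 * |I2| ≤ 3/2 * |v|^2 := by
    have := mul_le_mul_of_nonneg_left hI23 (by positivity : (0:ℝ) ≤ |v|^2/2)
    linarith
  have hv4 : |v|^4 = v^4 := by rw [← abs_pow, abs_of_nonneg (by positivity : (0:ℝ) ≤ v^4)]
  have e3 : |(v^2/2*I2)^2| ≤ 3*|v|^3 := by
    rw [abs_of_nonneg (by positivity : (0:ℝ) ≤ (v^2/2*I2)^2)]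
    have hI2sq : (0:ℝ) ≤ 9 - I2^2 := by nlinarith [abs_le.1 hI23]
    nlinarith [mul_nonneg hI2sq (by positivity : (0:ℝ) ≤ v^4), hv43, hv4,
      pow_nonneg hv0 3]
  have e4 : |(v^2/2*I2)*(Ra+Rb)| ≤ 3*|v|^3 := by
    rw [abs_mul, abs_mul, h1v]
    calc |v|^2/2 * |I2| * |Ra+Rb| ≤ 3/2 * |v|^2 * (2*|v|^3) := by
          apply mul_le_mul h2v habsum (abs_nonneg _) (by positivity)
    _ = 3 * |v|^5 := by ring
    _ ≤ 3*|v|^3 := by linarith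
  have e5 : |Ra*Rb| ≤ |v|^3 := by
    rw [abs_mul]
    calc |Ra| * |Rb| ≤ |v|^3 * |v|^3 := mul_le_mul hRa hRb (abs_nonneg _) (by positivity)
    _ = |v|^6 := by ring
    _ ≤ |v|^3 := hv63
  have split : (J + v*I1 + v^2/2*I2 + Ra) * (J + (-v)*I1 + v^2/2*I2 + Rb) - J^2 - v^2/12
      = v^2*(J*I2 - I1^2 - 1/12) + (J*(Ra+Rb) + v*I1*(Rb-Ra) + (v^2/2*I2)^2
        + (v^2/2*I2)*(Ra+Rb) + Ra*Rb) := by ring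
  rw [split]
  have sum_err : |J*(Ra+Rb) + v*I1*(Rb-Ra) + (v^2/2*I2)^2 + (v^2/2*I2)*(Ra+Rb) + Ra*Rb|
      ≤ 19*|v|^3 := by
    calc |J*(Ra+Rb) + v*I1*(Rb-Ra) + (v^2/2*I2)^2 + (v^2/2*I2)*(Ra+Rb) + Ra*Rb|
        ≤ |J*(Ra+Rb) + v*I1*(Rb-Ra) + (v^2/2*I2)^2 + (v^2/2*I2)*(Ra+Rb)| + |Ra*Rb| := abs_add_le _ _
    _ ≤ |J*(Ra+Rb) + v*I1*(Rb-Ra) + (v^2/2*I2)^2| + |(v^2/2*I2)*(Ra+Rb)| + |Ra*Rb| := by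
        linarith [abs_add_le (J*(Ra+Rb) + v*I1*(Rb-Ra) + (v^2/2*I2)^2) ((v^2/2*I2)*(Ra+Rb))]
    _ ≤ |J*(Ra+Rb) + v*I1*(Rb-Ra)| + |(v^2/2*I2)^2| + |(v^2/2*I2)*(Ra+Rb)| + |Ra*Rb| := by
        linarith [abs_add_le (J*(Ra+Rb) + v*I1*(Rb-Ra)) ((v^2/2*I2)^2)]
    _ ≤ |J*(Ra+Rb)| + |v*I1*(Rb-Ra)| + |(v^2/2*I2)^2| + |(v^2/2*I2)*(Ra+Rb)| + |Ra*Rb| := by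
        linarith [abs_add_le (J*(Ra+Rb)) (v*I1*(Rb-Ra))]
    _ ≤ 19*|v|^3 := by linarith
  calc |v^2*(J*I2 - I1^2 - 1/12) + (J*(Ra+Rb) + v*I1*(Rb-Ra) + (v^2/2*I2)^2
        + (v^2/2*I2)*(Ra+Rb) + Ra*Rb)|
      ≤ |v^2*(J*I2 - I1^2 - 1/12)| + |J*(Ra+Rb) + v*I1*(Rb-Ra) + (v^2/2*I2)^2
        + (v^2/2*I2)*(Ra+Rb) + Ra*Rb| := abs_add_le _ _
  _ ≤ v^2*(15*|u|) + 19*|v|^3 := by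
      have : |v^2*(J*I2 - I1^2 - 1/12)| = v^2 * |J*I2 - I1^2 - 1/12| := by
        rw [abs_mul, abs_of_nonneg (sq_nonneg v)]
      rw [this] at *
      have := mul_le_mul_of_nonneg_left hM (sq_nonneg v)
      linarith
  _ ≤ 35 * (|u| + |v|) * v^2 := by
      have h3 : |v|^3 = |v| * v^2 := by rw [← hV2]; ring
      rw [h3]
      nlinarith [sq_nonneg v, mul_nonneg hv0 (sq_nonneg v), mul_nonneg hu0 (sq_nonneg v)]

lemma key (u v : ℝ) (hu : |u| ≤ 1) (hv : |v| ≤ 1) :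
    |(∫ t in (0:ℝ)..1, Real.exp ((u+v)*t)) * (∫ t in (0:ℝ)..1, Real.exp ((u+-v)*t))
      - (∫ t in (0:ℝ)..1, Real.exp (u*t)) * (∫ t in (0:ℝ)..1, Real.exp (u*t)) - v^2/12|
      ≤ 35*(|u|+|v|)*v^2 := by
  obtain ⟨Ra, hRa, eA⟩ := expand u v hu hv
  obtain ⟨Rb, hRb, eB⟩ := expand u (-v) hu (by simpa using hv)
  obtain ⟨hJ, hI1, hI2⟩ := deviation_bounds u hu
  have hRb' : |Rb| ≤ |v|^3 := by
    calc |Rb| ≤ |(-v)|^3 := hRb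
    _ = |v|^3 := by rw [abs_neg]
  rw [eA, eB]
  have h := master u v hu hv _ _ _ hJ hI1 hI2 Ra Rb hRa hRb'
  convert h using 2
  ring

/-- for the covariance kernel `K(x,y) = ∫_0^1 e^((x+y)t) dt` of the
limiting Gaussian process `g`, with `Σ(x,y)` the covariance matrix of
`(g(x), g(y))`, we have the identity
`det Σ(x,y) = (x-y)^2 det Cov(g(x), (g(x)-g(y))/(x-y))`; as `δ → 0`, uniformly on
`[-δ,δ]`, `det Σ(x,y) = (x-y)^2 (1+o(1)) det Cov(g(0), g'(0))`
(here `Cov(g(0), g'(0)) = !![1, 1/2; 1/2, 1/3]`), and in particular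
`det Σ(x,y) ≥ c (x-y)^2` for some `c > 0` on a neighborhood of `0`. -/
theorem det_covariance_lower_bound
    (K : ℝ → ℝ → ℝ)
    (hK : ∀ x y : ℝ, K x y = ∫ t in (0:ℝ)..1, Real.exp ((x + y) * t)) :
    (∀ x y : ℝ, x ≠ y →
      (Matrix.det !![K x x, K x y; K x y, K y y] =
        (x - y) ^ 2 *
          Matrix.det !![K x x, (K x x - K x y) / (x - y);
            (K x x - K x y) / (x - y),
            (K x x - 2 * K x y + K y y) / (x - y) ^ 2])) ∧
    (∀ η : ℝ, 0 < η → ∃ δ₀ > (0:ℝ), ∀ x ∈ Set.Icc (-δ₀) δ₀,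
      ∀ y ∈ Set.Icc (-δ₀) δ₀, x ≠ y →
      |Matrix.det !![K x x, K x y; K x y, K y y] -
          (x - y) ^ 2 * Matrix.det !![(1:ℝ), 1/2; 1/2, 1/3]|
        ≤ η * (x - y) ^ 2) ∧
    (∃ c > (0:ℝ), ∃ δ₀ > (0:ℝ), ∀ x ∈ Set.Icc (-δ₀) δ₀,
      ∀ y ∈ Set.Icc (-δ₀) δ₀, x ≠ y →
      c * (x - y) ^ 2 ≤ Matrix.det !![K x x, K x y; K x y, K y y]) := by
  have hdet : ∀ x y : ℝ, Matrix.det !![K x x, K x y; K x y, K y y]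
      = K x x * K y y - K x y * K x y := by
    intro x y
    rw [Matrix.det_fin_two_of]
  have h12 : Matrix.det !![(1:ℝ), 1/2; 1/2, 1/3] = 1/12 := by
    rw [Matrix.det_fin_two_of]; norm_num
  have key2 : ∀ x y : ℝ, |x+y| ≤ 1 → |x-y| ≤ 1 →
      |K x x * K y y - K x y * K x y - (x-y)^2/12|
        ≤ 35*(|x+y|+|x-y|)*(x-y)^2 := by
    intro x y h1 h2
    have h := key (x+y) (x-y) h1 h2
    have ea : (∫ t in (0:ℝ)..1, Real.exp ((x+x)*t))
        = ∫ t in (0:ℝ)..1, Real.exp (((x+y)+(x-y))*t) := by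
      congr 1; ext t; congr 1; ring
    have eb : (∫ t in (0:ℝ)..1, Real.exp ((y+y)*t))
        = ∫ t in (0:ℝ)..1, Real.exp (((x+y)+-(x-y))*t) := by
      congr 1; ext t; congr 1; ring
    rw [hK x x, hK y y, hK x y, ea, eb]
    exact h
  have main : ∀ η : ℝ, 0 < η → ∃ δ₀ > (0:ℝ), ∀ x ∈ Set.Icc (-δ₀) δ₀,
      ∀ y ∈ Set.Icc (-δ₀) δ₀, x ≠ y →
      |Matrix.det !![K x x, K x y; K x y, K y y] -
          (x - y) ^ 2 * Matrix.det !![(1:ℝ), 1/2; 1/2, 1/3]|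
        ≤ η * (x - y) ^ 2 := by
    intro η hη
    refine ⟨min (1/2) (η/140), by positivity, ?_⟩
    intro x hx y hy hxy
    have hδ1 : min (1/2) (η/140) ≤ 1/2 := min_le_left _ _
    have hδ2 : min (1/2) (η/140) ≤ η/140 := min_le_right _ _
    have hxb : |x| ≤ min (1/2) (η/140) := abs_le.2 ⟨hx.1, hx.2⟩
    have hyb : |y| ≤ min (1/2) (η/140) := abs_le.2 ⟨hy.1, hy.2⟩
    have h1 : |x+y| ≤ 1 := by
      calc |x+y| ≤ |x| + |y| := abs_add_le _ _
      _ ≤ 1 := by linarith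
    have h2 : |x-y| ≤ 1 := by
      calc |x-y| ≤ |x| + |y| := abs_sub _ _
      _ ≤ 1 := by linarith
    have h := key2 x y h1 h2
    rw [hdet, h12]
    have hsum : |x+y| + |x-y| ≤ η/35 := by
      have := abs_add_le x y
      have := abs_sub x y
      linarith
    have hfin : 35*(|x+y|+|x-y|)*(x-y)^2 ≤ η * (x-y)^2 := by
      apply mul_le_mul_of_nonneg_right _ (sq_nonneg (x-y))
      linarith
    have heq : (x-y)^2 * (1/12 : ℝ) = (x-y)^2/12 := by ring
    rw [heq]
    linarith
  refine ⟨?_, main, ?_⟩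
  · intro x y hxy
    have hxy' : x - y ≠ 0 := sub_ne_zero.mpr hxy
    rw [Matrix.det_fin_two_of, Matrix.det_fin_two_of]
    field_simp
    ring
  · obtain ⟨δ₀, hδ₀, h⟩ := main (1/24) (by norm_num)
    refine ⟨1/24, by norm_num, δ₀, hδ₀, ?_⟩
    intro x hx y hy hxy
    have := h x hx y hy hxy
    rw [h12] at this
    have := abs_le.1 this
    nlinarith [sq_nonneg (x-y)]
end
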